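/- Let G be a locally compact group acting on a Banach space V by a uniformly bounded representation such that every orbit has compact closure (almost periodic module). Then the action of G on V factors through a compact group: there exists a compact group K, a continuous homomorphism G → K with dense image, and a separately continuous action of K on V extending that of G. -/

import Mathlib

/-- A factorization of a representation `ρ` of `G` on `V` through a compact group:
a compact group `K`, a continuous homomorphism `G → K` with dense image, and a
separately continuous representation of `K` on `V` extending `ρ`. -/
structure CompactFactorization {G V : Type*} [Group G] [TopologicalSpace G]
    [NormedAddCommGroup V] [NormedSpace ℝ V] (ρ : G →* (V →L[ℝ] V)) where
  K : Type
  [grp : Group K]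
  [top : TopologicalSpace K]
  [tgrp : IsTopologicalGroup K]
  [cpt : CompactSpace K]
  φ : G →* K
  σ : K →* (V →L[ℝ] V)
  cont_φ : Continuous φ
  dense_φ : DenseRange φ
  cont_σ : ∀ v : V, Continuous fun k => σ k v
  factors : ∀ g : G, σ (φ g) = ρ g

/-- an almost periodic uniformly bounded separately continuous representation
of a locally compact group on a Banach space factors through a compact group. -/
theorem stmt5 {G V : Type} [Group G] [TopologicalSpace G] [IsTopologicalGroup G]
    [LocallyCompactSpace G]
    [NormedAddCommGroup V] [NormedSpace ℝ V] [CompleteSpace V]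
    (ρ : G →* (V →L[ℝ] V)) (hcont : ∀ v : V, Continuous fun g => ρ g v)
    (hub : ∃ C : ℝ, ∀ g : G, ‖ρ g‖ ≤ C)
    (hap : ∀ v : V, IsCompact (closure (Set.range fun g => ρ g v))) :
    Nonempty (CompactFactorization ρ) := by
  classical
  obtain ⟨C₀, hC₀⟩ := hub
  set C : ℝ := max C₀ 1 with hCdef
  have hC1 : (1:ℝ) ≤ C := le_max_right _ _
  have hC0 : (0:ℝ) ≤ C := le_trans zero_le_one hC1
  have hC : ∀ g : G, ‖ρ g‖ ≤ C := fun g => (hC₀ g).trans (le_max_left _ _)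
  set R : Set (V → V) := Set.range (fun g : G => (ρ g : V → V)) with hRdef
  set S : Set (V → V) := closure R with hSdef
  set A : Set (V → V) := {f | ∀ v w, f (v+w) = f v + f w} ∩ ({f | ∀ (c:ℝ) (v), f (c•v) = c • f v}
      ∩ ({f | ∀ v, ‖f v‖ ≤ C*‖v‖} ∩ {f | ∀ v, ‖v‖ ≤ C*‖f v‖})) with hAdef
  have hAclosed : IsClosed A := by
    refine IsClosed.inter ?_ (IsClosed.inter ?_ (IsClosed.inter ?_ ?_))
    · have h : {f : V → V | ∀ v w, f (v+w) = f v + f w}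
          = ⋂ v, ⋂ w, {f : V → V | f (v+w) = f v + f w} := by
        ext f; simp [Set.mem_iInter]
      rw [h]
      exact isClosed_iInter fun v => isClosed_iInter fun w =>
        isClosed_eq (continuous_apply (v+w)) ((continuous_apply v).add (continuous_apply w))
    · have h : {f : V → V | ∀ (c:ℝ) (v), f (c•v) = c • f v}
          = ⋂ (c : ℝ), ⋂ v, {f : V → V | f (c•v) = c • f v} := by
        ext f; simp [Set.mem_iInter]
      rw [h]
      exact isClosed_iInter fun c => isClosed_iInter fun v =>
        isClosed_eq (continuous_apply (c•v)) ((continuous_apply v).const_smul c)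
    · have h : {f : V → V | ∀ v, ‖f v‖ ≤ C*‖v‖} = ⋂ v, {f : V → V | ‖f v‖ ≤ C*‖v‖} := by
        ext f; simp [Set.mem_iInter]
      rw [h]
      exact isClosed_iInter fun v =>
        isClosed_le (continuous_apply v).norm continuous_const
    · have h : {f : V → V | ∀ v, ‖v‖ ≤ C*‖f v‖} = ⋂ v, {f : V → V | ‖v‖ ≤ C*‖f v‖} := by
        ext f; simp [Set.mem_iInter]
      rw [h]
      exact isClosed_iInter fun v =>
        isClosed_le continuous_const (continuous_const.mul (continuous_apply v).norm)
  have hRA : R ⊆ A := by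
    rintro _ ⟨g, rfl⟩
    refine ⟨fun v w => (ρ g).map_add v w, fun c v => (ρ g).map_smul c v, ?_, ?_⟩
    · intro v
      exact ((ρ g).le_opNorm v).trans (mul_le_mul_of_nonneg_right (hC g) (norm_nonneg v))
    · intro v
      have h1 : (ρ g⁻¹) ((ρ g) v) = v := by
        rw [← ContinuousLinearMap.mul_apply, ← map_mul, inv_mul_cancel, map_one,
          ContinuousLinearMap.one_apply]
      calc ‖v‖ = ‖(ρ g⁻¹) ((ρ g) v)‖ := by rw [h1]
        _ ≤ ‖ρ g⁻¹‖ * ‖(ρ g) v‖ := (ρ g⁻¹).le_opNorm _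
        _ ≤ C * ‖(ρ g) v‖ := mul_le_mul_of_nonneg_right (hC g⁻¹) (norm_nonneg _)
  have hSA : S ⊆ A := closure_minimal hRA hAclosed
  have hsub : ∀ f ∈ S, ∀ v w : V, f (v - w) = f v - f w := by
    intro f hf v w
    obtain ⟨hadd, hsmul, -, -⟩ := hSA hf
    have h := hadd v ((-1:ℝ) • w)
    rw [hsmul (-1:ℝ) w] at h
    simpa [sub_eq_add_neg] using h
  have hfc : ∀ f ∈ S, Continuous f := by
    intro f hf
    obtain ⟨hadd, hsmul, hbd, -⟩ := hSA hf
    have hlip : LipschitzWith (Real.toNNReal C) f := by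
      apply LipschitzWith.of_dist_le_mul
      intro x y
      rw [dist_eq_norm, dist_eq_norm, ← hsub f hf]
      calc ‖f (x - y)‖ ≤ C * ‖x - y‖ := hbd _
        _ = Real.toNNReal C * ‖x - y‖ := by rw [Real.coe_toNNReal C hC0]
    exact hlip.continuous
  have hinj : ∀ f ∈ S, Function.Injective f := by
    intro f hf x y hxy
    obtain ⟨-, -, -, hlo⟩ := hSA hf
    have h := hlo (x - y)
    rw [hsub f hf, hxy, sub_self, norm_zero, mul_zero] at h
    exact sub_eq_zero.mp (norm_le_zero_iff.mp h)
  have hScompact : IsCompact S := by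
    refine IsCompact.of_isClosed_subset (isCompact_univ_pi fun v => hap v) isClosed_closure ?_
    refine closure_minimal ?_ (isClosed_set_pi fun v _ => isClosed_closure)
    rintro _ ⟨g, rfl⟩ v -
    exact subset_closure ⟨g, rfl⟩
  have hcomp_right : ∀ r : V → V, Continuous (fun f : V → V => f ∘ r) :=
    fun r => continuous_pi fun v => continuous_apply (r v)
  have hcomp_left : ∀ f ∈ S, Continuous (fun g : V → V => f ∘ g) := by
    intro f hf
    exact continuous_pi fun v => (hfc f hf).comp (continuous_apply v)
  have hcompR : ∀ a b : G, (ρ a : V → V) ∘ (ρ b : V → V) = (ρ (a*b) : V → V) := by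
    intro a b
    funext v
    simp [Function.comp, map_mul, ContinuousLinearMap.mul_apply]
  have hmulR : ∀ f ∈ S, ∀ g ∈ R, f ∘ g ∈ S := by
    rintro f hf _ ⟨b, rfl⟩
    rw [hSdef] at hf ⊢
    refine map_mem_closure (f := fun x : V → V => x ∘ (ρ b : V → V)) (t := R)
      (hcomp_right _) hf ?_
    rintro _ ⟨a, rfl⟩
    exact ⟨a * b, (hcompR a b).symm⟩
  have hmulS : ∀ f ∈ S, ∀ g ∈ S, f ∘ g ∈ S := by
    intro f hf g hg
    rw [hSdef] at hg
    have h := map_mem_closure (f := fun x : V → V => f ∘ x) (s := R) (t := S)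
      (hcomp_left f hf) hg (fun r hr => hmulR f hf r hr)
    rw [hSdef, closure_closure, ← hSdef] at h
    exact h
  have hidS : (id : V → V) ∈ S := by
    refine subset_closure ⟨1, ?_⟩
    funext v
    simp
  -- existence of inverses
  have hinv : ∀ f ∈ S, ∃ g ∈ S, f ∘ g = id ∧ g ∘ f = id := by
    intro f hf
    have hpS : ∀ n : ℕ, f^[n+1] ∈ S := by
      intro n
      induction n with
      | zero => simpa using hf
      | succ k ih =>
        rw [Function.iterate_succ']
        exact hmulS f hf _ ih
    set p : ℕ → (V → V) := fun n => f^[n+1] with hpdef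
    set T : Set (V → V) := closure (Set.range p) with hTdef
    have hTS : T ⊆ S :=
      closure_minimal (by rintro _ ⟨n, rfl⟩; exact hpS n) isClosed_closure
    have hTne : T.Nonempty := ⟨p 0, subset_closure ⟨0, rfl⟩⟩
    have hTcompact : IsCompact T := IsCompact.of_isClosed_subset hScompact isClosed_closure hTS
    have hppp : ∀ n m, p n ∘ p m = p (n + m + 1) := by
      intro n m
      simp only [hpdef]
      rw [← Function.iterate_add, show n+1+(m+1) = n+m+1+1 from by omega]
    have hmulT : ∀ a ∈ T, ∀ b ∈ T, a ∘ b ∈ T := by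
      have step1 : ∀ m, ∀ a ∈ T, a ∘ p m ∈ T := by
        intro m a ha
        rw [hTdef] at ha ⊢
        refine map_mem_closure (f := fun x : V → V => x ∘ p m) (t := Set.range p)
          (hcomp_right _) ha ?_
        rintro _ ⟨n, rfl⟩
        exact ⟨n + m + 1, (hppp n m).symm⟩
      intro a ha b hb
      rw [hTdef] at hb
      have h := map_mem_closure (f := fun x : V → V => a ∘ x) (s := Set.range p) (t := T)
        (hcomp_left a (hTS ha)) hb (by rintro _ ⟨m, rfl⟩; exact step1 m a ha)
      rw [hTdef, closure_closure, ← hTdef] at h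
      exact h
    have hidT : (id : V → V) ∈ T := by
      letI : Semigroup (V → V) := { mul := fun a b => a ∘ b, mul_assoc := fun a b c => rfl }
      obtain ⟨e, heT, hee⟩ := exists_idempotent_in_compact_subsemigroup
        (fun r => hcomp_right r) T hTne hTcompact hmulT
      have he : e = id := by
        funext v
        exact hinj e (hTS heT) (congrFun hee v)
      rwa [he] at heT
    have hrange : Set.range p = insert f (Set.range fun n => p (n+1)) := by
      ext x
      constructor
      · rintro ⟨n, rfl⟩
        cases n with
        | zero => exact Set.mem_insert_iff.mpr (Or.inl (by simp [hpdef]))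
        | succ k => exact Set.mem_insert_iff.mpr (Or.inr ⟨k, rfl⟩)
      · intro hx
        rcases Set.mem_insert_iff.mp hx with h | ⟨k, rfl⟩
        · exact ⟨0, by simp [hpdef, h]⟩
        · exact ⟨k+1, rfl⟩
    have hid_cases := hidT
    rw [hTdef, hrange, Set.insert_eq, closure_union, closure_singleton] at hid_cases
    rcases hid_cases with hcase | hcase
    
    · have hcase' : (id : V → V) = f := Set.mem_singleton_iff.mp hcase
      refine ⟨f, hf, ?_, ?_⟩ <;> rw [← hcase'] <;> rfl
    · have himg : (Set.range fun n => p (n+1)) ⊆ (fun gg => f ∘ gg) '' Set.range p := by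
        rintro _ ⟨n, rfl⟩
        exact ⟨p n, ⟨n, rfl⟩, (Function.iterate_succ' f (n+1)).symm⟩
      have hcl : closure ((fun gg => f ∘ gg) '' Set.range p) ⊆ (fun gg => f ∘ gg) '' T := by
        apply closure_minimal (Set.image_mono subset_closure)
        exact (hTcompact.image (hcomp_left f hf)).isClosed
      have hmem : (id : V → V) ∈ (fun gg => f ∘ gg) '' T :=
        hcl ((closure_mono himg) hcase)
      obtain ⟨g, hgT, hfg⟩ := hmem
      refine ⟨g, hTS hgT, hfg, ?_⟩
      funext v
      exact hinj f hf (congrFun hfg (f v))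
  -- the compact group K
  letI instMul : Mul {x : V → V // x ∈ S} :=
    ⟨fun a b => ⟨a.1 ∘ b.1, hmulS _ a.2 _ b.2⟩⟩
  letI instOne : One {x : V → V // x ∈ S} := ⟨⟨id, hidS⟩⟩
  letI instInv : Inv {x : V → V // x ∈ S} :=
    ⟨fun a => ⟨(hinv a.1 a.2).choose, (hinv a.1 a.2).choose_spec.1⟩⟩
  letI grpK : Group {x : V → V // x ∈ S} :=
    Group.ofLeftAxioms (fun a b c => Subtype.ext rfl)
      (fun a => Subtype.ext (Function.id_comp _))
      (fun a => Subtype.ext (hinv a.1 a.2).choose_spec.2.2)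
  haveI cptK : CompactSpace {x : V → V // x ∈ S} := isCompact_iff_compactSpace.mp hScompact
  -- joint continuity of multiplication
  have hmulcont : Continuous
      fun q : {x : V → V // x ∈ S} × {x : V → V // x ∈ S} => q.1 * q.2 := by
    have key : Continuous
        fun q : {x : V → V // x ∈ S} × {x : V → V // x ∈ S} => (q.1.1 ∘ q.2.1 : V → V) := by
      apply continuous_pi
      intro v
      rw [continuous_iff_continuousAt]
      rintro ⟨f₀, g₀⟩
      have h1 : Filter.Tendsto
          (fun q : {x : V → V // x ∈ S} × {x : V → V // x ∈ S} =>
            q.1.1 (q.2.1 v) - q.1.1 (g₀.1 v)) (nhds (f₀, g₀)) (nhds 0) := by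
        apply squeeze_zero_norm
          (a := fun q : {x : V → V // x ∈ S} × {x : V → V // x ∈ S} => C * ‖q.2.1 v - g₀.1 v‖)
        · intro q
          rw [← hsub q.1.1 q.1.2]
          exact (hSA q.1.2).2.2.1 _
        · have ht : Filter.Tendsto
              (fun q : {x : V → V // x ∈ S} × {x : V → V // x ∈ S} => q.2.1 v)
              (nhds (f₀, g₀)) (nhds (g₀.1 v)) :=
            (((continuous_apply v).comp (continuous_subtype_val.comp continuous_snd)).tendsto _)
          have h2 : Filter.Tendsto
              (fun q : {x : V → V // x ∈ S} × {x : V → V // x ∈ S} =>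
                C * ‖q.2.1 v - g₀.1 v‖) (nhds (f₀, g₀)) (nhds (C * ‖g₀.1 v - g₀.1 v‖)) :=
            (Filter.Tendsto.norm (ht.sub tendsto_const_nhds)).const_mul C
          simpa using h2
      have h2 : Filter.Tendsto
          (fun q : {x : V → V // x ∈ S} × {x : V → V // x ∈ S} => q.1.1 (g₀.1 v))
          (nhds (f₀, g₀)) (nhds (f₀.1 (g₀.1 v))) :=
        (((continuous_apply (g₀.1 v)).comp (continuous_subtype_val.comp continuous_fst)).tendsto _)
      have h3 := h1.add h2
      rw [zero_add] at h3
      exact h3.congr fun q => by abel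
    exact key.subtype_mk _
  haveI : ContinuousMul {x : V → V // x ∈ S} := ⟨hmulcont⟩
  -- continuity of inversion via closed graph / compactness
  have hGr : IsClosed {q : {x : V → V // x ∈ S} × {x : V → V // x ∈ S} | q.1 * q.2 = 1} :=
    isClosed_eq hmulcont continuous_const
  haveI : CompactSpace {q : {x : V → V // x ∈ S} × {x : V → V // x ∈ S} // q.1 * q.2 = 1} :=
    isCompact_iff_compactSpace.mp hGr.isCompact
  let e : {q : {x : V → V // x ∈ S} × {x : V → V // x ∈ S} // q.1 * q.2 = 1} ≃
      {x : V → V // x ∈ S} :=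
    { toFun := fun q => q.1.1
      invFun := fun x => ⟨(x, x⁻¹), mul_inv_cancel x⟩
      left_inv := fun q => Subtype.ext (Prod.ext rfl (inv_eq_of_mul_eq_one_right q.2))
      right_inv := fun x => rfl }
  have he : Continuous e := continuous_fst.comp continuous_subtype_val
  let hom := Continuous.homeoOfEquivCompactToT2 (f := e) he
  have hinvcont : Continuous fun x : {x : V → V // x ∈ S} => x⁻¹ := by
    have heq : (fun x : {x : V → V // x ∈ S} => x⁻¹) =
        (fun q : {q : {x : V → V // x ∈ S} × {x : V → V // x ∈ S} // q.1 * q.2 = 1} =>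
          q.1.2) ∘ hom.symm := by
      funext x
      rfl
    rw [heq]
    exact (continuous_snd.comp continuous_subtype_val).comp hom.symm.continuous
  haveI tgrpK : IsTopologicalGroup {x : V → V // x ∈ S} :=
    { continuous_mul := hmulcont, continuous_inv := hinvcont }
  -- the homomorphism φ
  let φ : G →* {x : V → V // x ∈ S} :=
    { toFun := fun g => ⟨(ρ g : V → V), subset_closure ⟨g, rfl⟩⟩
      map_one' := Subtype.ext (by show (⇑(ρ 1) : V → V) = id; rw [map_one]; rfl)
      map_mul' := fun a b => Subtype.ext (hcompR a b).symm }
  -- the representation σ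
  let σfun : {x : V → V // x ∈ S} → (V →L[ℝ] V) := fun f =>
    LinearMap.mkContinuous
      { toFun := f.1
        map_add' := (hSA f.2).1
        map_smul' := (hSA f.2).2.1 }
      C (hSA f.2).2.2.1
  let σ : {x : V → V // x ∈ S} →* (V →L[ℝ] V) :=
    { toFun := σfun
      map_one' := ContinuousLinearMap.ext fun v => rfl
      map_mul' := fun a b => ContinuousLinearMap.ext fun v => rfl }
  have cont_φ : Continuous φ := by
    exact (continuous_pi fun v => hcont v).subtype_mk _
  have dense_φ : DenseRange φ := by
    intro x
    have himg : (Subtype.val '' Set.range φ) = R := by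
      ext y
      constructor
      · rintro ⟨_, ⟨g, rfl⟩, rfl⟩
        exact ⟨g, rfl⟩
      · rintro ⟨g, rfl⟩
        exact ⟨φ g, ⟨g, rfl⟩, rfl⟩
    rw [closure_subtype, himg]
    exact x.2
  exact ⟨{ K := {x : V → V // x ∈ S}
           grp := grpK
           top := inferInstance
           tgrp := tgrpK
           cpt := cptK
           φ := φ
           σ := σ
           cont_φ := cont_φ
           dense_φ := dense_φ
           cont_σ := fun v => (continuous_apply v).comp continuous_subtype_val
           factors := fun g => ContinuousLinearMap.ext fun v => rfl }⟩
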